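/- arXiv:0901.4814 — 4 statements merged into one kernel-verified Lean document; each statement's English description precedes it below -/
import Mathlib

section
/- Perfect secrecy of Shamir's scheme for k-1 shares: fix a prime p, a secret s : ZMod p, and k-1 distinct nonzero evaluation points x₁,…,x_{k-1} in ZMod p. The map sending a coefficient vector (a₁,…,a_{k-1}) ∈ (ZMod p)^{k-1} to the share vector (f.eval x₁, …, f.eval x_{k-1}), where f(X) = s + Σ aⱼ X^j, is a bijection from (ZMod p)^{k-1} to (ZMod p)^{k-1}. -/
theorem shamir_share_map_bijective (p k : ℕ) (hp : p.Prime)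
    (x : Fin (k - 1) → ZMod p) (hx : Function.Injective x) (hx0 : ∀ i, x i ≠ 0)
    (s : ZMod p) :
    Function.Bijective
      (fun a : Fin (k - 1) → ZMod p =>
        fun i : Fin (k - 1) => s + ∑ j : Fin (k - 1), a j * (x i) ^ ((j : ℕ) + 1)) := by
  haveI : Fact p.Prime := ⟨hp⟩
  set M : Matrix (Fin (k-1)) (Fin (k-1)) (ZMod p) :=
    Matrix.of (fun i j : Fin (k-1) => (x i) ^ ((j : ℕ) + 1)) with hM
  have hdet : M.det ≠ 0 := by
    have : M = Matrix.of (fun i j : Fin (k-1) => x i * (Matrix.vandermonde x) i j) := by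
      ext i j
      simp [hM, Matrix.vandermonde, pow_succ, mul_comm]
    rw [this]
    have hprod : (Matrix.of (fun i j : Fin (k-1) => x i * (Matrix.vandermonde x) i j)).det
        = (∏ i, x i) * (Matrix.vandermonde x).det := by
      exact Matrix.det_mul_column x _
    rw [hprod]
    refine mul_ne_zero (Finset.prod_ne_zero_iff.2 fun i _ => hx0 i) ?_
    rw [Matrix.det_vandermonde_ne_zero_iff]
    exact hx
  have hinj : Function.Injective (M.mulVec) :=
    Matrix.mulVec_injective_iff_isUnit.2 (Matrix.isUnit_iff_isUnit_det M |>.2 (isUnit_iff_ne_zero.2 hdet))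
  rw [Fintype.bijective_iff_injective_and_card]
  refine ⟨fun a b hab => ?_, rfl⟩
  apply hinj
  funext i
  have := congrFun hab i
  simpa [Matrix.mulVec, dotProduct, hM, mul_comm] using this
end

section
/- Consequently, for uniformly random coefficients, any fixed collection of k-1 Shamir shares is uniformly distributed and independent of the secret: for any two secrets s, s' : ZMod p and any target share vector y ∈ (ZMod p)^{k-1}, the number of coefficient vectors a ∈ (ZMod p)^{k-1} producing share vector y under secret s equals the number producing y under secret s'. -/
theorem shamir_perfect_secrecy (p k : ℕ) (hp : p.Prime)
    (x : Fin (k - 1) → ZMod p) (hx : Function.Injective x) (hx0 : ∀ i, x i ≠ 0)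
    (s s' : ZMod p) (y : Fin (k - 1) → ZMod p) :
    Nat.card {a : Fin (k - 1) → ZMod p //
        ∀ i, s + ∑ j : Fin (k - 1), a j * (x i) ^ ((j : ℕ) + 1) = y i} =
    Nat.card {a : Fin (k - 1) → ZMod p //
        ∀ i, s' + ∑ j : Fin (k - 1), a j * (x i) ^ ((j : ℕ) + 1) = y i} := by
  haveI : Fact p.Prime := ⟨hp⟩
  obtain ⟨c, hMc'⟩ : ∃ c : Fin (k - 1) → ZMod p,
      ∀ i, ∑ j : Fin (k - 1), c j * (x i) ^ ((j : ℕ) + 1) = s - s' := by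
    let M : Matrix (Fin (k - 1)) (Fin (k - 1)) (ZMod p) :=
      Matrix.of (fun i j => x i ^ ((j : ℕ) + 1))
    have hMeq : M = Matrix.diagonal x * Matrix.vandermonde x := by
      ext i j
      simp [M, Matrix.mul_apply, Matrix.diagonal_apply, Matrix.vandermonde,
        Finset.sum_ite_eq, pow_succ, mul_comm]
    have hdet : IsUnit M.det := by
      rw [hMeq, Matrix.det_mul, Matrix.det_diagonal, Matrix.det_vandermonde]
      refine (IsUnit.mul_iff).2 ⟨?_, ?_⟩ <;> rw [isUnit_iff_ne_zero]
      · exact Finset.prod_ne_zero_iff.2 fun i _ => hx0 i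
      · refine Finset.prod_ne_zero_iff.2 fun i _ => Finset.prod_ne_zero_iff.2 fun j hj => ?_
        have hij : i ≠ j := fun h => by simp [h] at hj
        exact sub_ne_zero.2 fun h => hij (hx h.symm)
    refine ⟨M⁻¹.mulVec (fun _ => s - s'), fun i => ?_⟩
    have hMc : M.mulVec (M⁻¹.mulVec (fun _ => s - s')) = fun _ => s - s' := by
      rw [Matrix.mulVec_mulVec, Matrix.mul_nonsing_inv _ hdet, Matrix.one_mulVec]
    have h := congrFun hMc i
    rw [Matrix.mulVec, dotProduct] at h
    simpa [M, mul_comm] using h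
  refine Nat.card_congr ⟨fun ⟨a, ha⟩ => ⟨fun j => a j + c j, ?_⟩,
    fun ⟨a, ha⟩ => ⟨fun j => a j - c j, ?_⟩, fun ⟨a, ha⟩ => by simp, fun ⟨a, ha⟩ => by simp⟩
  · intro i
    rw [← ha i]
    simp only [add_mul, Finset.sum_add_distrib, hMc' i]
    ring
  · intro i
    rw [← ha i]
    simp only [sub_mul, Finset.sum_sub_distrib, hMc' i]
    ring
end

section
/- Full correctness of the recursive (k,n) scheme: define polynomials p₁,…,p_{k-1} recursively as in Algorithm 2 from secrets s₁,…,s_{k-1} ∈ ZMod p and a random a₁ ∈ ZMod p, with n < p and k ≤ n. Then from any k of the final shares (i, p_{k-1}.eval i), i ∈ {1,…,n}, the reconstruction phase recovers all secrets: the interpolant of the k shares equals p_{k-1}, its constant term is s_{k-1}, and iterating coefficient-extraction-then-interpolation recovers s_{k-2}, …, s₁. -/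
open Polynomial

/-- The recursive dealer polynomials of Algorithm 2: `shamirRec p a₁ s 1 = a₁ X + s 1`,
and `p_i = s_i + ∑_{m=1}^{i} (p_{i-1}.eval m) X^m`. -/
noncomputable def shamirRec (p : ℕ) (a₁ : ZMod p) (s : ℕ → ZMod p) : ℕ → Polynomial (ZMod p)
  | 0 => C (s 0)
  | 1 => C a₁ * X + C (s 1)
  | (i + 2) => C (s (i + 2)) +
      ∑ m ∈ Finset.Icc 1 (i + 2), C ((shamirRec p a₁ s (i + 1)).eval (m : ZMod p)) * X ^ m

lemma shamirRec_degree_le (p : ℕ) (a₁ : ZMod p) (s : ℕ → ZMod p) (i : ℕ) :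
    (shamirRec p a₁ s i).degree ≤ i := by
  match i with
  | 0 => simpa [shamirRec] using degree_C_le
  | 1 =>
    show (C a₁ * X + C (s 1)).degree ≤ ((1 : ℕ) : WithBot ℕ)
    simpa using Polynomial.degree_linear_le (a := a₁) (b := s 1)
  | (i + 2) =>
    apply le_trans (degree_add_le _ _)
    simp only [max_le_iff]
    refine ⟨le_trans degree_C_le (by exact_mod_cast Nat.cast_nonneg' _), ?_⟩
    apply le_trans (Polynomial.degree_sum_le _ _)
    apply Finset.sup_le
    intro m hm
    apply le_trans (degree_mul_le _ _)
    apply le_trans (add_le_add degree_C_le (degree_X_pow_le m))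
    simp only [Finset.mem_Icc] at hm
    exact_mod_cast by simpa using hm.2

theorem recursive_scheme_correct (p n k : ℕ) [hp : Fact p.Prime] (hk : 2 ≤ k) (hkn : k ≤ n)
    (hnp : n < p) (a₁ : ZMod p) (s : ℕ → ZMod p) :
    (∀ S : Finset ℕ, S ⊆ Finset.Icc 1 n → S.card = k →
      Lagrange.interpolate S (fun m => (m : ZMod p))
        (fun m => (shamirRec p a₁ s (k - 1)).eval (m : ZMod p)) = shamirRec p a₁ s (k - 1)) ∧
    ((shamirRec p a₁ s 1).coeff 0 = s 1) ∧
    (∀ i, 2 ≤ i → i ≤ k - 1 →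
      (shamirRec p a₁ s i).coeff 0 = s i ∧
      ∀ m ∈ Finset.Icc 1 i,
        (shamirRec p a₁ s i).coeff m = (shamirRec p a₁ s (i - 1)).eval (m : ZMod p)) := by
  refine ⟨?_, ?_, ?_⟩
  · intro S hS hcard
    have hinj : Set.InjOn (fun m : ℕ => (m : ZMod p)) ↑S := by
      intro a ha b hb hab
      have ha' : a < p := lt_of_le_of_lt (Finset.mem_Icc.mp (hS ha)).2 hnp
      have hb' : b < p := lt_of_le_of_lt (Finset.mem_Icc.mp (hS hb)).2 hnp
      have := congrArg ZMod.val hab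
      rwa [ZMod.val_cast_of_lt ha', ZMod.val_cast_of_lt hb'] at this
    have hdeg : (shamirRec p a₁ s (k - 1)).degree < (S.card : ℕ∞) := by
      apply lt_of_le_of_lt (shamirRec_degree_le p a₁ s (k - 1))
      rw [hcard]
      exact WithBot.coe_lt_coe.mpr (Nat.sub_lt (n := k) (m := 1) (by omega) one_pos)
    exact (Lagrange.eq_interpolate hinj hdeg).symm
  · simp [shamirRec, coeff_add]
  · rintro i hi2 hik
    obtain ⟨j, rfl⟩ : ∃ j, i = j + 2 := ⟨i - 2, by omega⟩
    constructor
    · rw [shamirRec]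
      rw [coeff_add, coeff_C, Polynomial.finset_sum_coeff]
      have : ∀ m ∈ Finset.Icc 1 (j + 2),
          (C ((shamirRec p a₁ s (j + 1)).eval (m : ZMod p)) * X ^ m).coeff 0 = 0 := by
        intro m hm
        simp only [Finset.mem_Icc] at hm
        rw [coeff_C_mul, coeff_X_pow, if_neg (by omega)]
        ring
      rw [Finset.sum_congr rfl this]
      simp
    · intro m hm
      simp only [Finset.mem_Icc] at hm
      rw [shamirRec]
      rw [coeff_add, coeff_C, if_neg (by omega), Polynomial.finset_sum_coeff]
      rw [Finset.sum_eq_single m]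
      · simp [coeff_C_mul, coeff_X_pow]
      · intro b hb hbm
        rw [coeff_C_mul, coeff_X_pow, if_neg (fun h => hbm h.symm)]
        ring
      · intro h
        exact absurd (Finset.mem_Icc.mpr hm) h
end

section
/- The share-generation map of the full recursive scheme is injective in the secrets: with evaluation points 1,…,n distinct in ZMod p (n < p), the map sending (a₁, s₁, …, s_{k-1}) to the n final shares (p_{k-1}.eval 1, …, p_{k-1}.eval n) is injective, where p_{k-1} is built by the recursion of Algorithm 2. -/
open Polynomial

lemma shamirRec_natDegree (p : ℕ) (a : ZMod p) (s : ℕ → ZMod p) :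
    ∀ i, (shamirRec p a s i).natDegree ≤ i := by
  intro i
  match i with
  | 0 => show (C (s 0)).natDegree ≤ 0; simp
  | 1 =>
    show (C a * X + C (s 1)).natDegree ≤ 1
    apply le_trans (natDegree_add_le _ _)
    simp only [natDegree_C, max_le_iff]
    constructor
    · exact le_trans (natDegree_C_mul_le _ _) natDegree_X_le
    · omega
  | (i + 2) =>
    show (C (s (i + 2)) + ∑ m ∈ Finset.Icc 1 (i + 2),
        C ((shamirRec p a s (i + 1)).eval (m : ZMod p)) * X ^ m).natDegree ≤ i + 2
    apply le_trans (natDegree_add_le _ _)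
    simp only [natDegree_C, max_le_iff]
    refine ⟨by omega, ?_⟩
    apply natDegree_sum_le_of_forall_le
    intro m hm
    refine le_trans (natDegree_C_mul_le _ _) (le_trans (natDegree_X_pow_le _) ?_)
    exact (Finset.mem_Icc.mp hm).2

lemma coeff_sum_C_mul_X_pow {R : Type*} [Semiring R] (c : ℕ → R) (t : Finset ℕ) (m : ℕ)
    (hm : m ∈ t) : (∑ i ∈ t, C (c i) * X ^ i).coeff m = c m := by
  rw [finset_sum_coeff, Finset.sum_eq_single m]
  · simp [coeff_C_mul, coeff_X_pow]
  · intro b _ hb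
    rw [coeff_C_mul, coeff_X_pow, if_neg (fun e => hb e.symm), mul_zero]
  · intro h; exact absurd hm h

lemma eval_eq_of_poly_eq {p : ℕ} [Fact p.Prime] {q r : Polynomial (ZMod p)} {N : ℕ}
    (hq : q.natDegree ≤ N) (hr : r.natDegree ≤ N) (hN : N + 1 < p)
    (h : ∀ m, 1 ≤ m → m ≤ N + 1 → q.eval (m : ZMod p) = r.eval (m : ZMod p)) : q = r := by
  have hsub : q - r = 0 := by
    apply Polynomial.eq_zero_of_natDegree_lt_card_of_eval_eq_zero (q - r)
      (f := fun i : Fin (N + 1) => (((i : ℕ) + 1 : ℕ) : ZMod p))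
    · intro i j hij
      have hi' := i.isLt
      have hj' := j.isLt
      have hi : (i : ℕ) + 1 < p := by omega
      have hj : (j : ℕ) + 1 < p := by omega
      have := congrArg ZMod.val hij
      rw [ZMod.val_natCast_of_lt hi, ZMod.val_natCast_of_lt hj] at this
      exact Fin.ext (by omega)
    · intro i
      have hi' := i.isLt
      have := h ((i : ℕ) + 1) (by omega) (by omega)
      simp only [eval_sub, this, sub_self]
    · have := Polynomial.natDegree_sub_le q r
      simp only [Fintype.card_fin]
      omega
  exact sub_eq_zero.mp hsub

lemma shamirRec_inj (p : ℕ) [Fact p.Prime] (a a' : ZMod p) (s s' : ℕ → ZMod p) :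
    ∀ i, 1 ≤ i → i < p → shamirRec p a s i = shamirRec p a' s' i →
      a = a' ∧ ∀ j, 1 ≤ j → j ≤ i → s j = s' j := by
  intro i
  induction i with
  | zero => omega
  | succ i ih =>
    intro _ hip h
    match i, ih with
    | 0, _ =>
      constructor
      · have := congrArg (fun q => Polynomial.coeff q 1) h
        simpa [shamirRec, coeff_C] using this
      · intro j hj1 hj2
        have hj : j = 1 := by omega
        subst hj
        have := congrArg (fun q => Polynomial.coeff q 0) h
        simpa [shamirRec, coeff_C] using this
    | (j + 1), ih =>
      rw [show j + 1 + 1 = j + 2 from rfl] at h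
      simp only [shamirRec] at h
      have hcoeff : ∀ m, m ∈ Finset.Icc 1 (j + 2) →
          (shamirRec p a s (j + 1)).eval (m : ZMod p)
            = (shamirRec p a' s' (j + 1)).eval (m : ZMod p) := by
        intro m hm
        have h1 : 1 ≤ m := (Finset.mem_Icc.mp hm).1
        have := congrArg (fun q => Polynomial.coeff q m) h
        simp only [coeff_add, coeff_C, if_neg (by omega : ¬ m = 0), zero_add] at this
        rwa [coeff_sum_C_mul_X_pow _ _ _ hm, coeff_sum_C_mul_X_pow _ _ _ hm] at this
      have hprev : shamirRec p a s (j + 1) = shamirRec p a' s' (j + 1) := by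
        apply eval_eq_of_poly_eq (N := j + 1) (shamirRec_natDegree _ _ _ _)
          (shamirRec_natDegree _ _ _ _) (by omega)
        intro m hm1 hm2
        exact hcoeff m (Finset.mem_Icc.mpr ⟨hm1, hm2⟩)
      obtain ⟨ha, hs⟩ := ih (by omega) (by omega) hprev
      refine ⟨ha, ?_⟩
      intro m hm1 hm2
      rcases Nat.lt_or_ge m (j + 2) with hlt | hge
      · exact hs m hm1 (by omega)
      · have hm : m = j + 2 := by omega
        subst hm
        have := congrArg (fun q => Polynomial.coeff q 0) h
        simp only [coeff_add, coeff_C, if_pos rfl] at this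
        rw [finset_sum_coeff, finset_sum_coeff] at this
        have hz : ∀ (c : ℕ → ZMod p), ∑ i ∈ Finset.Icc 1 (j + 2), (C (c i) * X ^ i).coeff 0
            = 0 := by
          intro c
          apply Finset.sum_eq_zero
          intro x hx
          have h1 : 1 ≤ x := (Finset.mem_Icc.mp hx).1
          rw [coeff_C_mul, coeff_X_pow, if_neg (by omega), mul_zero]
        rw [hz, hz] at this
        simpa using this

theorem share_map_injective (p n k : ℕ) (hp : p.Prime) (hk : 2 ≤ k) (hkn : k ≤ n)
    (hnp : n < p) :
    Function.Injective
      (fun v : ZMod p × (Fin (k - 1) → ZMod p) =>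
        fun i : Fin n =>
          (shamirRec p v.1
              (fun j => if h : j - 1 < k - 1 then v.2 ⟨j - 1, h⟩ else 0) (k - 1)).eval
            (((i : ℕ) + 1 : ZMod p))) := by
  haveI : Fact p.Prime := ⟨hp⟩
  intro v w h
  simp only [funext_iff] at h
  set s : ℕ → ZMod p := fun j => if h : j - 1 < k - 1 then v.2 ⟨j - 1, h⟩ else 0 with hs
  set s' : ℕ → ZMod p := fun j => if h : j - 1 < k - 1 then w.2 ⟨j - 1, h⟩ else 0 with hs'
  have hpoly : shamirRec p v.1 s (k - 1) = shamirRec p w.1 s' (k - 1) := by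
    apply eval_eq_of_poly_eq (N := n - 1) ?_ ?_ (by omega)
    · intro m hm1 hm2
      have := h ⟨m - 1, by omega⟩
      simp only [Fin.val_mk] at this
      have hm : (m : ZMod p) = (((m - 1 : ℕ)) : ZMod p) + 1 := by
        conv_lhs => rw [show m = (m - 1) + 1 by omega]
        push_cast
        ring
      rw [hm]
      exact this
    · exact le_trans (shamirRec_natDegree _ _ _ _) (by omega)
    · exact le_trans (shamirRec_natDegree _ _ _ _) (by omega)
  obtain ⟨ha, hsj⟩ := shamirRec_inj p v.1 w.1 s s' (k - 1) (by omega) (by omega) hpoly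
  apply Prod.ext ha
  funext j
  have := hsj ((j : ℕ) + 1) (by omega) (by omega)
  simp only [hs, hs', Nat.add_sub_cancel, dif_pos j.isLt] at this
  simpa using this
end
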